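/- Structural constraint on same-depth weights differing in one decision (Lemma 1): let the induced tree weights ω be defined by the recursion ω_{r_{1:i}} = W^{i+1}_{1:D} + Σ_{k=1}^{i} W^{i+1}_{D+k} · r_k · ω_{r_{1:k−1}} with ω_{r_{1:0}} = W^1. If two patterns r_{1:i}, r'_{1:i} ∈ {0,1}^i agree in all coordinates except coordinate j (where r_j ≠ r'_j), then there exists a scalar α ∈ ℝ such that ω_{r_{1:i}} − ω_{r'_{1:i}} = α · ω_{r_{1:j−1}} (note r_{1:j−1} = r'_{1:j−1}). -/
import Mathlib


/-- The decision weights of the oblique decision tree induced by a locally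
constant network with one neuron per layer. -/
noncomputable def omega {D : ℕ} (W1 : Fin D → ℝ) (Win : ℕ → Fin D → ℝ)
    (Wrec : ℕ → ℕ → ℝ) (r : ℕ → Bool) : ℕ → (Fin D → ℝ)
  | 0 => W1
  | (i + 1) => fun j =>
      Win (i + 1) j +
        ∑ k ∈ (Finset.Icc 1 (i + 1)).attach,
          Wrec (i + 1) k.1 * (if r k.1 then 1 else 0) *
            omega W1 Win Wrec r (k.1 - 1) j
  decreasing_by
    have := Finset.mem_Icc.mp k.2
    omega

lemma omega_zero {D : ℕ} (W1 : Fin D → ℝ) (Win : ℕ → Fin D → ℝ)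
    (Wrec : ℕ → ℕ → ℝ) (r : ℕ → Bool) :
    omega W1 Win Wrec r 0 = W1 := by
  rw [omega]

lemma omega_succ {D : ℕ} (W1 : Fin D → ℝ) (Win : ℕ → Fin D → ℝ)
    (Wrec : ℕ → ℕ → ℝ) (r : ℕ → Bool) (i : ℕ) (idx : Fin D) :
    omega W1 Win Wrec r (i + 1) idx =
      Win (i + 1) idx +
        ∑ k ∈ (Finset.Icc 1 (i + 1)).attach,
          Wrec (i + 1) k.1 * (if r k.1 then 1 else 0) *
            omega W1 Win Wrec r (k.1 - 1) idx := by
  rw [omega]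

lemma omega_eq_of_agree {D : ℕ} (W1 : Fin D → ℝ) (Win : ℕ → Fin D → ℝ)
    (Wrec : ℕ → ℕ → ℝ) : ∀ i (r r' : ℕ → Bool),
    (∀ k ∈ Finset.Icc 1 i, r k = r' k) →
    omega W1 Win Wrec r i = omega W1 Win Wrec r' i := by
  intro i
  induction i using Nat.strong_induction_on with
  | _ i IH =>
    match i with
    | 0 => intro r r' _; rw [omega_zero, omega_zero]
    | i + 1 =>
      intro r r' h
      funext idx
      rw [omega_succ, omega_succ]
      congr 1
      apply Finset.sum_congr rfl
      intro k _
      have hk := Finset.mem_Icc.mp k.2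
      rw [h k.1 k.2, IH (k.1 - 1) (by omega) r r' (fun l hl => by
        have := Finset.mem_Icc.mp hl
        exact h l (Finset.mem_Icc.mpr (by omega)))]

/-- Lemma 1: if two depth-i patterns differ exactly in
coordinate j, the corresponding weights differ by a multiple of ω_{r_{1:j−1}}. -/
theorem omega_structural_constraint {D : ℕ} (W1 : Fin D → ℝ)
    (Win : ℕ → Fin D → ℝ) (Wrec : ℕ → ℕ → ℝ)
    (i j : ℕ) (hj1 : 1 ≤ j) (hji : j ≤ i)
    (r r' : ℕ → Bool)
    (hagree : ∀ k ∈ Finset.Icc 1 i, k ≠ j → r k = r' k)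
    (hdiff : r j ≠ r' j) :
    ∃ α : ℝ, ∀ idx : Fin D,
      omega W1 Win Wrec r i idx - omega W1 Win Wrec r' i idx
        = α * omega W1 Win Wrec r (j - 1) idx := by
  clear hdiff
  induction i using Nat.strong_induction_on with
  | _ i IH =>
    obtain ⟨m, rfl⟩ : ∃ m, i = m + 1 := ⟨i - 1, by omega⟩
    have key : ∀ k, j < k → k ≤ m + 1 →
        ∃ α : ℝ, ∀ idx : Fin D,
          omega W1 Win Wrec r (k - 1) idx - omega W1 Win Wrec r' (k - 1) idx
            = α * omega W1 Win Wrec r (j - 1) idx := by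
      intro k h1 h2
      exact IH (k - 1) (by omega) (by omega) (fun l hl hlj => by
        have := Finset.mem_Icc.mp hl
        exact hagree l (Finset.mem_Icc.mpr (by omega)) hlj)
    set A : ℕ → ℝ := fun k =>
      if h : j < k ∧ k ≤ m + 1 then Classical.choose (key k h.1 h.2) else 0
      with hA
    set c : ℕ → ℝ := fun k =>
      if k < j then 0
      else if k = j then
        Wrec (m + 1) j * ((if r j then 1 else 0) - (if r' j then 1 else 0))
      else Wrec (m + 1) k * (if r k then 1 else 0) * A k
      with hc
    refine ⟨∑ k ∈ (Finset.Icc 1 (m + 1)).attach, c k.1, fun idx => ?_⟩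
    rw [omega_succ, omega_succ]
    have step1 :
        (Win (m+1) idx + ∑ k ∈ (Finset.Icc 1 (m + 1)).attach,
            Wrec (m+1) k.1 * (if r k.1 then 1 else 0) * omega W1 Win Wrec r (k.1-1) idx)
        - (Win (m+1) idx + ∑ k ∈ (Finset.Icc 1 (m + 1)).attach,
            Wrec (m+1) k.1 * (if r' k.1 then 1 else 0) * omega W1 Win Wrec r' (k.1-1) idx)
        = ∑ k ∈ (Finset.Icc 1 (m + 1)).attach,
            (Wrec (m+1) k.1 * (if r k.1 then 1 else 0) * omega W1 Win Wrec r (k.1-1) idx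
             - Wrec (m+1) k.1 * (if r' k.1 then 1 else 0) * omega W1 Win Wrec r' (k.1-1) idx) := by
      rw [Finset.sum_sub_distrib]; ring
    rw [step1]
    have step2 : ∀ k ∈ (Finset.Icc 1 (m + 1)).attach,
        (Wrec (m+1) k.1 * (if r k.1 then 1 else 0) * omega W1 Win Wrec r (k.1-1) idx
         - Wrec (m+1) k.1 * (if r' k.1 then 1 else 0) * omega W1 Win Wrec r' (k.1-1) idx)
        = c k.1 * omega W1 Win Wrec r (j - 1) idx := by
      intro k _
      have hk := Finset.mem_Icc.mp k.2
      rcases lt_trichotomy k.1 j with hlt | heq | hgt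
      · -- k < j : both terms equal
        have hr : r k.1 = r' k.1 :=
          hagree k.1 (Finset.mem_Icc.mpr (by omega)) (by omega)
        have hω : omega W1 Win Wrec r (k.1 - 1) = omega W1 Win Wrec r' (k.1 - 1) :=
          omega_eq_of_agree W1 Win Wrec (k.1 - 1) r r' (fun l hl => by
            have := Finset.mem_Icc.mp hl
            exact hagree l (Finset.mem_Icc.mpr (by omega)) (by omega))
        rw [hr, hω]
        simp [hc, hlt]
      · -- k = j
        have hω : omega W1 Win Wrec r (k.1 - 1) = omega W1 Win Wrec r' (k.1 - 1) :=
          omega_eq_of_agree W1 Win Wrec (k.1 - 1) r r' (fun l hl => by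
            have := Finset.mem_Icc.mp hl
            exact hagree l (Finset.mem_Icc.mpr (by omega)) (by omega))
        have heq' : (k.1 : ℕ) - 1 = j - 1 := by omega
        rw [heq'] at hω
        have hcj : c k.1 = Wrec (m + 1) j *
            ((if r j then 1 else 0) - (if r' j then 1 else 0)) := by
          simp [hc, heq]
        rw [hcj, heq, ← hω]
        ring
      · -- k > j
        have hr : r k.1 = r' k.1 :=
          hagree k.1 (Finset.mem_Icc.mpr (by omega)) (by omega)
        have hcond : j < k.1 ∧ k.1 ≤ m + 1 := ⟨hgt, hk.2⟩
        have hAk : A k.1 = Classical.choose (key k.1 hcond.1 hcond.2) := by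
          simp [hA, hcond]
        have hspec := Classical.choose_spec (key k.1 hcond.1 hcond.2) idx
        have hck : c k.1 = Wrec (m + 1) k.1 * (if r k.1 then 1 else 0) * A k.1 := by
          simp only [hc]
          rw [if_neg (by omega), if_neg (by omega)]
        rw [hck, hAk, hr]
        rw [← hr]
        calc Wrec (m+1) k.1 * (if r k.1 then 1 else 0) * omega W1 Win Wrec r (k.1-1) idx
              - Wrec (m+1) k.1 * (if r k.1 then 1 else 0) * omega W1 Win Wrec r' (k.1-1) idx
            = Wrec (m+1) k.1 * (if r k.1 then 1 else 0) *
                (omega W1 Win Wrec r (k.1-1) idx - omega W1 Win Wrec r' (k.1-1) idx) := by ring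
          _ = Wrec (m+1) k.1 * (if r k.1 then 1 else 0) *
                (Classical.choose (key k.1 hcond.1 hcond.2) *
                  omega W1 Win Wrec r (j-1) idx) := by rw [hspec]
          _ = _ := by ring
    rw [Finset.sum_congr rfl step2, ← Finset.sum_mul]
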